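/- Let $0<\alpha\le\infty$, let $E_1$ and $E_2$ be quasi Banach ideal spaces on $(0,\alpha)$, and let $0<\theta<1$. If $E_1$ and $E_2$ are continuously embedded in $L_0(0,\alpha)$ (with the topology of convergence in measure), then the Calderón space $E_1^{1-\theta}E_2^{\theta}$ is a quasi Banach ideal space on $(0,\alpha)$; in particular it is complete with respect to its quasi-norm. -/

import Mathlib

open MeasureTheory Filter Set Topology
open scoped ENNReal NNReal BigOperators

noncomputable section

/-! ## Function space framework: symmetric quasi Banach spaces on `(0, α)` -/

/-- The Lebesgue measure restricted to the interval `(0, α)`, `α ∈ (0, ∞]`. -/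
def mIoo (α : ℝ≥0∞) : Measure ℝ :=
  MeasureTheory.volume.restrict {t : ℝ | 0 < t ∧ ENNReal.ofReal t < α}

/-- The decreasing rearrangement `μ_t(f)` of a function `f` with respect to the measure `m`. -/
def drear (m : Measure ℝ) (f : ℝ → ℂ) (t : ℝ) : ℝ :=
  sInf {s : ℝ | 0 < s ∧ m {u : ℝ | s < ‖f u‖} ≤ ENNReal.ofReal t}

/-- A quasi Banach ideal space of (complex valued) measurable functions over the measure `m`:
a complete quasi-normed space of measurable functions satisfying the ideal property. -/
structure QBIdealSpace (m : Measure ℝ) where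
  mem : (ℝ → ℂ) → Prop
  nrm : (ℝ → ℂ) → ℝ
  qc : ℝ
  one_le_qc : 1 ≤ qc
  measurable_of_mem : ∀ f, mem f → Measurable f
  zero_mem : mem 0
  add_mem : ∀ f g, mem f → mem g → mem (f + g)
  smul_mem : ∀ (c : ℂ) f, mem f → mem (c • f)
  nrm_nonneg : ∀ f, 0 ≤ nrm f
  nrm_smul : ∀ (c : ℂ) f, mem f → nrm (c • f) = ‖c‖ * nrm f
  nrm_add_le : ∀ f g, mem f → mem g → nrm (f + g) ≤ qc * (nrm f + nrm g)
  nrm_eq_zero_iff : ∀ f, mem f → (nrm f = 0 ↔ f =ᵐ[m] 0)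
  ideal : ∀ f g, mem g → Measurable f →
    (∀ᵐ t ∂m, ‖f t‖ ≤ ‖g t‖) → mem f ∧ nrm f ≤ nrm g
  complete : ∀ u : ℕ → ℝ → ℂ, (∀ n, mem (u n)) →
    (∀ ε : ℝ, 0 < ε → ∃ N : ℕ, ∀ i j, N ≤ i → N ≤ j → nrm (u i - u j) < ε) →
    ∃ f, mem f ∧ Tendsto (fun n => nrm (u n - f)) atTop (nhds 0)

/-- `E` is a symmetric (rearrangement invariant) space: if `g` is measurable and
`μ(g) ≤ μ(f)` for some `f ∈ E`, then `g ∈ E` with `‖g‖ ≤ ‖f‖`. -/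
def IsSymmetricQB (m : Measure ℝ) (E : QBIdealSpace m) : Prop :=
  ∀ f g, E.mem f → Measurable g → (∀ t, 0 < t → drear m g t ≤ drear m f t) →
    E.mem g ∧ E.nrm g ≤ E.nrm f

/-- `E` is fully symmetric: it is symmetric and moreover closed under
Hardy–Littlewood–Pólya submajorization, with monotonicity of the quasi-norm. -/
def IsFullySymmetricQB (m : Measure ℝ) (E : QBIdealSpace m) : Prop :=
  IsSymmetricQB m E ∧
  ∀ f g, E.mem f → Measurable g →
    (∀ t, 0 < t →
      (∫ s in Ioc (0:ℝ) t, drear m g s) ≤ (∫ s in Ioc (0:ℝ) t, drear m f s)) →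
    E.mem g ∧ E.nrm g ≤ E.nrm f

/-- `E` is `s`-convex: `‖(∑ |fᵢ|^s)^{1/s}‖ ≤ C (∑ ‖fᵢ‖^s)^{1/s}` for finite families. -/
def SConvex {m : Measure ℝ} (E : QBIdealSpace m) (s : ℝ) : Prop :=
  ∃ C : ℝ, 0 < C ∧ ∀ (n : ℕ) (f : Fin n → ℝ → ℂ), (∀ i, E.mem (f i)) →
    E.mem (fun t => (((∑ i, ‖f i t‖ ^ s) ^ (1/s) : ℝ) : ℂ)) ∧
    E.nrm (fun t => (((∑ i, ‖f i t‖ ^ s) ^ (1/s) : ℝ) : ℂ)) ≤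
      C * (∑ i, E.nrm (f i) ^ s) ^ (1/s)

/-- The pair `(mem, nrm)` has order continuous norm: for every downward directed net of
nonnegative members decreasing (a.e. pointwise) to `0`, the norms tend to `0`. -/
def OrderContNorm (m : Measure ℝ) (mem : (ℝ → ℂ) → Prop) (nrm : (ℝ → ℂ) → ℝ) : Prop :=
  ∀ (ι : Type) [Preorder ι] [IsDirected ι (· ≤ ·)] [Nonempty ι] (x : ι → ℝ → ℝ),
    (∀ i, mem (fun t => (x i t : ℂ))) →
    (∀ i j, i ≤ j → ∀ t, x j t ≤ x i t) →
    (∀ i t, 0 ≤ x i t) →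
    (∀ᵐ t ∂m, (⨅ i, x i t) = 0) →
    Tendsto (fun i => nrm (fun t => (x i t : ℂ))) atTop (nhds 0)

/-- `E` is separable (equivalently, has order continuous norm): there is a countable set
of members of `E` which is dense in `E` for the quasi-norm. -/
def SeparableQB {m : Measure ℝ} (E : QBIdealSpace m) : Prop :=
  ∃ D : Set (ℝ → ℂ), D.Countable ∧ (∀ g ∈ D, E.mem g) ∧
    ∀ f, E.mem f → ∀ ε : ℝ, 0 < ε → ∃ g ∈ D, E.nrm (f - g) < ε

/-- The dilation operator `(D_a f)(t) = f(at) χ_{(0,α)}(at)`. -/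
def dil (α : ℝ≥0∞) (a : ℝ) (f : ℝ → ℂ) : ℝ → ℂ :=
  fun t => if 0 < a * t ∧ ENNReal.ofReal (a * t) < α then f (a * t) else 0

/-- The upper Boyd index of `E` is `< q`:
there is `0 < q' < q` with `‖D_a f‖ ≤ c a^{-1/q'} ‖f‖` for all `a ≥ 1`. -/
def BoydUpperLT (α : ℝ≥0∞) (E : QBIdealSpace (mIoo α)) (q : ℝ) : Prop :=
  ∃ q' c : ℝ, 0 < q' ∧ q' < q ∧ 0 < c ∧ ∀ a : ℝ, 1 ≤ a → ∀ f, E.mem f →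
    E.mem (dil α a f) ∧ E.nrm (dil α a f) ≤ c * a ^ (-(1/q')) * E.nrm f

/-- The upper Boyd index of `E` is finite. -/
def BoydUpperFinite (α : ℝ≥0∞) (E : QBIdealSpace (mIoo α)) : Prop :=
  ∃ q' c : ℝ, 0 < q' ∧ 0 < c ∧ ∀ a : ℝ, 1 ≤ a → ∀ f, E.mem f →
    E.mem (dil α a f) ∧ E.nrm (dil α a f) ≤ c * a ^ (-(1/q')) * E.nrm f

/-- The lower Boyd index of `E` is `> p`:
there is `p' > p` with `‖D_a f‖ ≤ c a^{-1/p'} ‖f‖` for all `0 < a ≤ 1`. -/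
def BoydLowerGT (α : ℝ≥0∞) (E : QBIdealSpace (mIoo α)) (p : ℝ) : Prop :=
  ∃ p' c : ℝ, p < p' ∧ 0 < c ∧ ∀ a : ℝ, 0 < a → a ≤ 1 → ∀ f, E.mem f →
    E.mem (dil α a f) ∧ E.nrm (dil α a f) ≤ c * a ^ (-(1/p')) * E.nrm f

/-! ## Calderón spaces, pointwise products and convexifications -/

/-- Membership in the Calderón space `E₁^{1-θ} E₂^{θ}`. -/
def calMem (mem1 mem2 : (ℝ → ℂ) → Prop) (θ : ℝ) (x : ℝ → ℂ) : Prop :=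
  Measurable x ∧ ∃ x1 x2, mem1 x1 ∧ mem2 x2 ∧
    ∀ t, ‖x t‖ = ‖x1 t‖ ^ (1 - θ) * ‖x2 t‖ ^ θ

/-- The quasi-norm of the Calderón space `E₁^{1-θ} E₂^{θ}`. -/
def calNrm (mem1 : (ℝ → ℂ) → Prop) (nrm1 : (ℝ → ℂ) → ℝ)
    (mem2 : (ℝ → ℂ) → Prop) (nrm2 : (ℝ → ℂ) → ℝ) (θ : ℝ) (x : ℝ → ℂ) : ℝ :=
  sInf {c : ℝ | ∃ x1 x2, mem1 x1 ∧ mem2 x2 ∧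
    (∀ t, ‖x t‖ = ‖x1 t‖ ^ (1 - θ) * ‖x2 t‖ ^ θ) ∧
    c = nrm1 x1 ^ (1 - θ) * nrm2 x2 ^ θ}

/-- Membership in the pointwise product space `X₁ ⊙ X₂`. -/
def prodMem {X : Type*} [Mul X] (mem1 mem2 : X → Prop) (x : X) : Prop :=
  ∃ x1 x2, mem1 x1 ∧ mem2 x2 ∧ x = x1 * x2

/-- The quasi-norm of the product space `X₁ ⊙ X₂`. -/
def prodNrm {X : Type*} [Mul X] (mem1 : X → Prop) (nrm1 : X → ℝ)
    (mem2 : X → Prop) (nrm2 : X → ℝ) (x : X) : ℝ :=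
  sInf {c : ℝ | ∃ x1 x2, mem1 x1 ∧ mem2 x2 ∧ x = x1 * x2 ∧ c = nrm1 x1 * nrm2 x2}

/-- Membership in the `p`-convexification `E^{(p)} = {f : |f|^p ∈ E}`. -/
def convMem (mem : (ℝ → ℂ) → Prop) (p : ℝ) (f : ℝ → ℂ) : Prop :=
  Measurable f ∧ mem (fun t => ((‖f t‖ ^ p : ℝ) : ℂ))

/-- The quasi-norm of the `p`-convexification, `‖f‖_{E^{(p)}} = ‖|f|^p‖_E^{1/p}`. -/
def convNrm (nrm : (ℝ → ℂ) → ℝ) (p : ℝ) (f : ℝ → ℂ) : ℝ :=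
  nrm (fun t => ((‖f t‖ ^ p : ℝ) : ℂ)) ^ (1 / p)

/-! ## Complex interpolation of couples of quasi Banach spaces -/

/-- The open strip `0 < Re z < 1`. -/
def stripS : Set ℂ := {z : ℂ | 0 < z.re ∧ z.re < 1}

/-- The closed strip `0 ≤ Re z ≤ 1`. -/
def stripC : Set ℂ := {z : ℂ | 0 ≤ z.re ∧ z.re ≤ 1}

/-- The complex interpolation quasi-norm at `θ` of the couple `(X₀, X₁)`, computed via the
space `𝓕₀` of finite sums `f(z) = ∑ gₖ(z) vₖ` with `gₖ` analytic on the strip, continuous and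
bounded on its closure, and `vₖ ∈ X₀ ∩ X₁`. -/
def interpNrm {X : Type*} [AddCommGroup X] [Module ℂ X]
    (mem0 : X → Prop) (nrm0 : X → ℝ) (mem1 : X → Prop) (nrm1 : X → ℝ)
    (θ : ℝ) (x : X) : ℝ :=
  sInf {c : ℝ | ∃ (n : ℕ) (g : Fin n → ℂ → ℂ) (v : Fin n → X),
    (∀ k, DifferentiableOn ℂ (g k) stripS) ∧
    (∀ k, ContinuousOn (g k) stripC) ∧
    (∀ k, ∃ M : ℝ, ∀ z ∈ stripC, ‖g k z‖ ≤ M) ∧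
    (∀ k, mem0 (v k) ∧ mem1 (v k)) ∧
    (∑ k, g k ((θ : ℂ)) • v k) = x ∧
    c = max (⨆ t : ℝ, nrm0 (∑ k, g k (Complex.I * (t : ℂ)) • v k))
            (⨆ t : ℝ, nrm1 (∑ k, g k (1 + Complex.I * (t : ℂ)) • v k))}

/-- `(X₀, X₁)_θ = E` with constants `A, B`: `X₀ ∩ X₁ ⊆ E`; on `X₀ ∩ X₁` the interpolation
quasi-norm satisfies `A ‖x‖_E ≤ ‖x‖_θ ≤ B ‖x‖_E`; and `X₀ ∩ X₁` is dense in `E` — i.e. `E` is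
(isomorphic to) the completion of `(X₀ ∩ X₁, ‖·‖_θ)`. -/
def ComplexInterpEq {X : Type*} [AddCommGroup X] [Module ℂ X]
    (mem0 : X → Prop) (nrm0 : X → ℝ) (mem1 : X → Prop) (nrm1 : X → ℝ)
    (memE : X → Prop) (nrmE : X → ℝ) (θ A B : ℝ) : Prop :=
  (∀ x, mem0 x → mem1 x → memE x) ∧
  (∀ x, mem0 x → mem1 x →
      A * nrmE x ≤ interpNrm mem0 nrm0 mem1 nrm1 θ x ∧
      interpNrm mem0 nrm0 mem1 nrm1 θ x ≤ B * nrmE x) ∧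
  (∀ x, memE x → ∀ ε : ℝ, 0 < ε → ∃ y, mem0 y ∧ mem1 y ∧ memE (x - y) ∧ nrmE (x - y) < ε)

/-! ## Real interpolation: `K`-functional -/

/-- The Peetre `K`-functional of the couple `(X₀, X₁)`. -/
def Kfun {X : Type*} [AddCommGroup X] (mem0 : X → Prop) (nrm0 : X → ℝ)
    (mem1 : X → Prop) (nrm1 : X → ℝ) (t : ℝ) (x : X) : ℝ :=
  sInf {c : ℝ | ∃ x0 x1, mem0 x0 ∧ mem1 x1 ∧ x = x0 + x1 ∧ c = nrm0 x0 + t * nrm1 x1}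

/-- Membership in the sum space `X₀ + X₁`. -/
def sumMem {X : Type*} [AddCommGroup X] (mem0 mem1 : X → Prop) (x : X) : Prop :=
  ∃ x0 x1, mem0 x0 ∧ mem1 x1 ∧ x = x0 + x1

/-- The real interpolation quasi-norm `‖x‖_{θ,p}` (ℝ≥0∞-valued), with the usual supremum
modification for `p = ∞`. -/
def realNrmE {X : Type*} [AddCommGroup X] (mem0 : X → Prop) (nrm0 : X → ℝ)
    (mem1 : X → Prop) (nrm1 : X → ℝ) (θ : ℝ) (p : ℝ≥0∞) (x : X) : ℝ≥0∞ :=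
  if p = ⊤ then ⨆ t ∈ Ioi (0:ℝ), ENNReal.ofReal (t ^ (-θ) * Kfun mem0 nrm0 mem1 nrm1 t x)
  else (∫⁻ t in Ioi (0:ℝ),
    ENNReal.ofReal ((t ^ (-θ) * Kfun mem0 nrm0 mem1 nrm1 t x) ^ p.toReal / t)) ^ (1 / p.toReal)

/-- Membership in the real interpolation space `(X₀, X₁)_{θ,p}`. -/
def realMem {X : Type*} [AddCommGroup X] (mem0 : X → Prop) (nrm0 : X → ℝ)
    (mem1 : X → Prop) (nrm1 : X → ℝ) (θ : ℝ) (p : ℝ≥0∞) (x : X) : Prop :=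
  sumMem mem0 mem1 x ∧ realNrmE mem0 nrm0 mem1 nrm1 θ p x < ⊤

/-- The (real valued) real interpolation quasi-norm. -/
def realNrm {X : Type*} [AddCommGroup X] (mem0 : X → Prop) (nrm0 : X → ℝ)
    (mem1 : X → Prop) (nrm1 : X → ℝ) (θ : ℝ) (p : ℝ≥0∞) (x : X) : ℝ :=
  (realNrmE mem0 nrm0 mem1 nrm1 θ p x).toReal

/-! ## Noncommutative setting: semifinite von Neumann algebras, `τ`-measurable operators -/

/-- An abstract model of a semifinite von Neumann algebra `M` with a normal semifinite faithful
trace `τ` with `τ(1) = traceOne`, together with its `*`-algebra `L` of `τ`-measurable operators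
(in which `M` sits as the subset `M`), the generalized singular value function `μ`, and the
σ-weak (w*-) topology on `L` (restricting to that of `M`). -/
structure NCSpace where
  L : Type
  Lring : Ring L
  Lalg : Algebra ℂ L
  Lstar : StarRing L
  Ltop : TopologicalSpace L
  M : Set L
  one_mem : (1 : L) ∈ M
  add_mem : ∀ x y, x ∈ M → y ∈ M → x + y ∈ M
  mul_mem : ∀ x y, x ∈ M → y ∈ M → x * y ∈ M
  smul_mem : ∀ (c : ℂ) x, x ∈ M → c • x ∈ M
  star_mem : ∀ x, x ∈ M → star x ∈ M
  traceOne : ℝ≥0∞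
  traceOne_pos : 0 < traceOne
  mu : L → ℝ → ℝ
  mu_nonneg : ∀ x t, 0 ≤ mu x t
  mu_antitone : ∀ x, AntitoneOn (mu x) (Ioi (0:ℝ))
  mu_measurable : ∀ x, Measurable (mu x)
  mu_vanish : ∀ x t, traceOne ≤ ENNReal.ofReal t → mu x t = 0

attribute [instance] NCSpace.Lring NCSpace.Lalg NCSpace.Lstar NCSpace.Ltop

/-- The generalized singular value function of `x`, as a (complex valued) function on `(0,∞)`. -/
def muF (V : NCSpace) (x : V.L) : ℝ → ℂ := fun t => ((V.mu x t : ℝ) : ℂ)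

/-- Membership in the noncommutative symmetric space `E(M) = {x : μ(x) ∈ E}`. -/
def memEM (V : NCSpace) (E : QBIdealSpace (mIoo V.traceOne)) (x : V.L) : Prop :=
  E.mem (muF V x)

/-- The quasi-norm of `E(M)`: `‖x‖_{E(M)} = ‖μ(x)‖_E`. -/
def nrmEM (V : NCSpace) (E : QBIdealSpace (mIoo V.traceOne)) (x : V.L) : ℝ :=
  E.nrm (muF V x)

/-- A subdiagonal algebra `𝒜` of `M` with respect to a (normal faithful `τ`-invariant)
conditional expectation `ℰ` onto the diagonal `𝒟 = 𝒜 ∩ 𝒜*`: a w*-closed subalgebra of `M`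
such that `𝒜 + 𝒜*` is w*-dense in `M` and `ℰ` is multiplicative on `𝒜`. -/
structure SubdiagonalAlg (V : NCSpace) where
  A : Set V.L
  subset_M : A ⊆ V.M
  one_mem : (1 : V.L) ∈ A
  add_mem : ∀ x y, x ∈ A → y ∈ A → x + y ∈ A
  mul_mem : ∀ x y, x ∈ A → y ∈ A → x * y ∈ A
  smul_mem : ∀ (c : ℂ) x, x ∈ A → c • x ∈ A
  isClosed : IsClosed A
  wdense : ∀ x ∈ V.M, x ∈ closure {y : V.L | ∃ a ∈ A, ∃ b ∈ A, y = a + star b}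
  D : Set V.L
  D_def : D = {x : V.L | x ∈ A ∧ star x ∈ A}
  ce : V.L →ₗ[ℂ] V.L
  ce_into_D : ∀ x ∈ V.M, ce x ∈ D
  ce_mult : ∀ a b, a ∈ A → b ∈ A → ce (a * b) = ce a * ce b
  ce_idem : ∀ d ∈ D, ce d = d

/-- Membership in the noncommutative Hardy space associated with a (quasi-normed) subspace of
`L₀(M)` given by `(mem, nrm)`: the closure of `𝒜 ∩ E(M)` in `E(M)`. -/
def memEA (V : NCSpace) (S : SubdiagonalAlg V) (mem : V.L → Prop) (nrm : V.L → ℝ)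
    (x : V.L) : Prop :=
  mem x ∧ ∀ ε : ℝ, 0 < ε → ∃ a ∈ S.A, mem a ∧ nrm (x - a) < ε

/-- Membership in the noncommutative `L_p`-space: `∫ μ_t(x)^p dt < ∞`. -/
def LpMem (V : NCSpace) (p : ℝ) (x : V.L) : Prop :=
  (∫⁻ t in Ioi (0:ℝ), ENNReal.ofReal (V.mu x t ^ p)) < ⊤

/-- The noncommutative `L_p` quasi-norm. -/
def LpNrm (V : NCSpace) (p : ℝ) (x : V.L) : ℝ :=
  (∫ t in Ioi (0:ℝ), V.mu x t ^ p) ^ (1 / p)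

/-- Membership in the noncommutative Hardy space `H_p(𝒜)`:
the closure of `𝒜 ∩ L_p(M)` in `L_p(M)`. -/
def HpMem (V : NCSpace) (S : SubdiagonalAlg V) (p : ℝ) (x : V.L) : Prop :=
  LpMem V p x ∧ ∀ ε : ℝ, 0 < ε → ∃ a ∈ S.A, LpMem V p a ∧ LpNrm V p (x - a) < ε

section Helpers
variable {θ : ℝ} (hθ0 : 0 < θ) (hθ1 : θ < 1)

lemma rpow_split {a : ℝ} (ha : 0 ≤ a) : a ^ (1-θ) * a ^ θ = a := by
  rw [← Real.rpow_add' ha (by rw [sub_add_cancel]; norm_num), sub_add_cancel, Real.rpow_one]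

include hθ0 hθ1 in
lemma holder2 {a b c d : ℝ} (ha : 0 ≤ a) (hb : 0 ≤ b) (hc : 0 ≤ c) (hd : 0 ≤ d) :
    a^(1-θ)*b^θ + c^(1-θ)*d^θ ≤ (a+c)^(1-θ)*(b+d)^θ := by
  have h1θ : (0:ℝ) < 1 - θ := by linarith
  rcases eq_or_lt_of_le (by positivity : (0:ℝ) ≤ a + c) with hA | hA
  · have ha0 : a = 0 := by linarith
    have hc0 : c = 0 := by linarith
    simp [ha0, hc0, Real.zero_rpow (ne_of_gt h1θ)]
  rcases eq_or_lt_of_le (by positivity : (0:ℝ) ≤ b + d) with hB | hB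
  · have hb0 : b = 0 := by linarith
    have hd0 : d = 0 := by linarith
    simp [hb0, hd0, Real.zero_rpow (ne_of_gt hθ0)]
  have key : ∀ x y : ℝ, 0 ≤ x → 0 ≤ y →
      x^(1-θ)*y^θ ≤ (a+c)^(1-θ)*(b+d)^θ * ((1-θ)*(x/(a+c)) + θ*(y/(b+d))) := by
    intro x y hx hy
    have := Real.geom_mean_le_arith_mean2_weighted (le_of_lt h1θ) (le_of_lt hθ0)
      (div_nonneg hx hA.le) (div_nonneg hy hB.le) (by ring)
    calc x^(1-θ)*y^θ = (a+c)^(1-θ)*(b+d)^θ * ((x/(a+c))^(1-θ) * (y/(b+d))^θ) := by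
          rw [Real.div_rpow hx hA.le, Real.div_rpow hy hB.le]
          field_simp
      _ ≤ _ := by
          apply mul_le_mul_of_nonneg_left this (by positivity)
  calc a^(1-θ)*b^θ + c^(1-θ)*d^θ
      ≤ (a+c)^(1-θ)*(b+d)^θ * ((1-θ)*(a/(a+c)) + θ*(b/(b+d)))
        + (a+c)^(1-θ)*(b+d)^θ * ((1-θ)*(c/(a+c)) + θ*(d/(b+d))) :=
        add_le_add (key a b ha hb) (key c d hc hd)
    _ = (a+c)^(1-θ)*(b+d)^θ := by
        rw [← mul_add]
        have : (1-θ)*(a/(a+c)) + θ*(b/(b+d)) + ((1-θ)*(c/(a+c)) + θ*(d/(b+d))) = 1 := by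
          field_simp
          ring
        rw [this, mul_one]

include hθ0 hθ1 in
lemma holder_sum (s : Finset ℕ) (g h : ℕ → ℝ) (hg : ∀ i, 0 ≤ g i) (hh : ∀ i, 0 ≤ h i) :
    ∑ i ∈ s, (g i)^(1-θ) * (h i)^θ ≤ (∑ i ∈ s, g i)^(1-θ) * (∑ i ∈ s, h i)^θ := by
  classical
  induction s using Finset.induction with
  | empty => simp [Real.zero_rpow (by linarith : (1:ℝ)-θ ≠ 0)]
  | @insert a s hx ih =>
    rw [Finset.sum_insert hx, Finset.sum_insert hx, Finset.sum_insert hx]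
    calc (g a)^(1-θ)*(h a)^θ + ∑ i ∈ s, (g i)^(1-θ)*(h i)^θ
        ≤ (g a)^(1-θ)*(h a)^θ + (∑ i ∈ s, g i)^(1-θ) * (∑ i ∈ s, h i)^θ := by linarith [ih]
      _ ≤ _ := holder2 hθ0 hθ1 (hg a) (hh a) (Finset.sum_nonneg fun i _ => hg i)
          (Finset.sum_nonneg fun i _ => hh i)
end Helpers
section Generic
variable {m' : Measure ℝ} (E : QBIdealSpace m')

lemma QBIdealSpace.nrm_zero : E.nrm 0 = 0 :=
  (E.nrm_eq_zero_iff 0 E.zero_mem).2 (by rfl)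

lemma QBIdealSpace.mem_neg {f : ℝ → ℂ} (hf : E.mem f) : E.mem (-f) := by
  have := E.smul_mem (-1) f hf
  rwa [neg_one_smul] at this

lemma QBIdealSpace.nrm_neg {f : ℝ → ℂ} (hf : E.mem f) : E.nrm (-f) = E.nrm f := by
  have := E.nrm_smul (-1) f hf
  rwa [neg_one_smul, norm_neg, norm_one, one_mul] at this

lemma QBIdealSpace.mem_ofReal {x : ℝ → ℝ} (hx : Measurable x) {g : ℝ → ℂ} (hg : E.mem g)
    (hle : ∀ᵐ t ∂m', |x t| ≤ ‖g t‖) :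
    E.mem (fun t => (x t : ℂ)) ∧ E.nrm (fun t => (x t : ℂ)) ≤ E.nrm g := by
  refine E.ideal _ g hg (Complex.measurable_ofReal.comp hx) ?_
  filter_upwards [hle] with t ht
  simpa [Complex.norm_real, Real.norm_eq_abs] using ht

lemma QBIdealSpace.mem_sum {s : Finset ℕ} {g : ℕ → ℝ → ℂ} (hg : ∀ k, E.mem (g k)) :
    E.mem (∑ k ∈ s, g k) :=
  Finset.sum_induction g E.mem (fun a b ha hb => E.add_mem a b ha hb) E.zero_mem
    (fun k _ => hg k)

lemma QBIdealSpace.nrm_sum_le (g : ℕ → ℝ → ℂ) (hg : ∀ k, E.mem (g k)) :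
    ∀ n : ℕ, E.nrm (∑ k ∈ Finset.range n, g k) ≤
      ∑ k ∈ Finset.range n, E.qc ^ (k+1) * E.nrm (g k) := by
  have hq0 : 0 < E.qc := lt_of_lt_of_le one_pos E.one_le_qc
  intro n
  induction n generalizing g hg with
  | zero => simp [E.nrm_zero]
  | succ n ih =>
    rw [Finset.sum_range_succ', Finset.sum_range_succ']
    calc E.nrm ((∑ k ∈ Finset.range n, g (k+1)) + g 0)
        ≤ E.qc * (E.nrm (∑ k ∈ Finset.range n, g (k+1)) + E.nrm (g 0)) :=
          E.nrm_add_le _ _ (E.mem_sum fun k => hg (k+1)) (hg 0)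
      _ ≤ E.qc * ((∑ k ∈ Finset.range n, E.qc ^ (k+1) * E.nrm (g (k+1))) + E.nrm (g 0)) := by
          have := ih (fun k => g (k+1)) (fun k => hg (k+1))
          nlinarith [E.nrm_nonneg (g 0)]
      _ = (∑ k ∈ Finset.range n, E.qc ^ (k+1+1) * E.nrm (g (k+1))) + E.qc ^ (0+1) * E.nrm (g 0) := by
          rw [mul_add, Finset.mul_sum]
          congr 1
          · exact Finset.sum_congr rfl fun k _ => by ring
          · ring
end Generic
lemma Measurable.cabs {f : ℝ → ℂ} (hf : Measurable f) :
    Measurable fun t => ‖f t‖ := by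
  simpa using hf.norm

section Cal
variable {α : ℝ≥0∞} {E1 E2 : QBIdealSpace (mIoo α)} {θ : ℝ} (hθ0 : 0 < θ) (hθ1 : θ < 1)

lemma calSet_mem_nonneg {f : ℝ → ℂ} {c : ℝ}
    (hc : c ∈ {c : ℝ | ∃ x1 x2, E1.mem x1 ∧ E2.mem x2 ∧
      (∀ t, ‖f t‖ = ‖x1 t‖ ^ (1 - θ) * ‖x2 t‖ ^ θ) ∧
      c = E1.nrm x1 ^ (1 - θ) * E2.nrm x2 ^ θ}) : 0 ≤ c := by
  obtain ⟨x1, x2, h1, h2, -, rfl⟩ := hc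
  have := E1.nrm_nonneg x1
  have := E2.nrm_nonneg x2
  positivity

lemma calNrm_nonneg (f : ℝ → ℂ) : 0 ≤ calNrm E1.mem E1.nrm E2.mem E2.nrm θ f :=
  Real.sInf_nonneg fun _ hc => calSet_mem_nonneg hc

lemma calSet_bddBelow (f : ℝ → ℂ) :
    BddBelow {c : ℝ | ∃ x1 x2, E1.mem x1 ∧ E2.mem x2 ∧
      (∀ t, ‖f t‖ = ‖x1 t‖ ^ (1 - θ) * ‖x2 t‖ ^ θ) ∧
      c = E1.nrm x1 ^ (1 - θ) * E2.nrm x2 ^ θ} :=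
  ⟨0, fun _ hc => calSet_mem_nonneg hc⟩

lemma calNrm_le {f x1 x2 : ℝ → ℂ} (h1 : E1.mem x1) (h2 : E2.mem x2)
    (hfac : ∀ t, ‖f t‖ = ‖x1 t‖ ^ (1 - θ) * ‖x2 t‖ ^ θ) :
    calNrm E1.mem E1.nrm E2.mem E2.nrm θ f ≤ E1.nrm x1 ^ (1 - θ) * E2.nrm x2 ^ θ :=
  csInf_le (calSet_bddBelow f) ⟨x1, x2, h1, h2, hfac, rfl⟩

lemma calNrm_congr_abs {f g : ℝ → ℂ}
    (h : ∀ t, ‖f t‖ = ‖g t‖) :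
    calNrm E1.mem E1.nrm E2.mem E2.nrm θ f = calNrm E1.mem E1.nrm E2.mem E2.nrm θ g := by
  unfold calNrm
  congr 1
  ext c
  constructor
  · rintro ⟨x1, x2, h1, h2, hfac, rfl⟩
    exact ⟨x1, x2, h1, h2, fun t => (h t).symm.trans (hfac t), rfl⟩
  · rintro ⟨x1, x2, h1, h2, hfac, rfl⟩
    exact ⟨x1, x2, h1, h2, fun t => (h t).trans (hfac t), rfl⟩

lemma calMem_neg {f : ℝ → ℂ} (hf : calMem E1.mem E2.mem θ f) :
    calMem E1.mem E2.mem θ (-f) := by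
  obtain ⟨hm, x1, x2, h1, h2, hfac⟩ := hf
  exact ⟨hm.neg, x1, x2, h1, h2, fun t => by simpa using hfac t⟩

lemma calNrm_neg (f : ℝ → ℂ) :
    calNrm E1.mem E1.nrm E2.mem E2.nrm θ (-f) = calNrm E1.mem E1.nrm E2.mem E2.nrm θ f :=
  calNrm_congr_abs fun t => by simp

end Cal
section Cal2
variable {α : ℝ≥0∞} {E1 E2 : QBIdealSpace (mIoo α)} {θ : ℝ} (hθ0 : 0 < θ) (hθ1 : θ < 1)

lemma abs_smul_apply (γ : ℝ) (x : ℝ → ℂ) (t : ℝ) :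
    ‖((γ:ℂ) • x) t‖ = |γ| * ‖x t‖ := by
  simp [Pi.smul_apply, smul_eq_mul, map_mul, Complex.norm_real, Real.norm_eq_abs]

include hθ0 hθ1 in
lemma exists_good_factor {f : ℝ → ℂ} (hf : calMem E1.mem E2.mem θ f) {ε : ℝ} (hε : 0 < ε) :
    ∃ x1 x2, E1.mem x1 ∧ E2.mem x2 ∧
      (∀ t, ‖f t‖ = ‖x1 t‖ ^ (1-θ) * ‖x2 t‖ ^ θ) ∧
      E1.nrm x1 ≤ calNrm E1.mem E1.nrm E2.mem E2.nrm θ f + ε ∧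
      E2.nrm x2 ≤ calNrm E1.mem E1.nrm E2.mem E2.nrm θ f + ε := by
  have h1θ : (0:ℝ) < 1 - θ := by linarith
  obtain ⟨hfm, y1, y2, hy1, hy2, hyfac⟩ := hf
  set CN := calNrm E1.mem E1.nrm E2.mem E2.nrm θ f with hCN
  have hCN0 : 0 ≤ CN := calNrm_nonneg f
  obtain ⟨c, hcS, hclt⟩ := Real.lt_sInf_add_pos
    (⟨_, ⟨y1, y2, hy1, hy2, hyfac, rfl⟩⟩ :
      Set.Nonempty {c : ℝ | ∃ x1 x2, E1.mem x1 ∧ E2.mem x2 ∧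
        (∀ t, ‖f t‖ = ‖x1 t‖ ^ (1 - θ) * ‖x2 t‖ ^ θ) ∧
        c = E1.nrm x1 ^ (1 - θ) * E2.nrm x2 ^ θ}) hε
  obtain ⟨x1, x2, hx1, hx2, hfac, hc⟩ := hcS
  set a1 := E1.nrm x1 with ha1
  set a2 := E2.nrm x2 with ha2
  have ha1' : 0 ≤ a1 := E1.nrm_nonneg x1
  have ha2' : 0 ≤ a2 := E2.nrm_nonneg x2
  -- the general rescaling step
  have main : ∀ γ1 γ2 : ℝ, 0 < γ1 → 0 < γ2 → γ1^(1-θ) * γ2^θ = 1 →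
      E1.mem ((γ1:ℂ) • x1) ∧ E2.mem ((γ2:ℂ) • x2) ∧
      (∀ t, ‖f t‖ =
        ‖((γ1:ℂ) • x1) t‖ ^ (1-θ) * ‖((γ2:ℂ) • x2) t‖ ^ θ) ∧
      E1.nrm ((γ1:ℂ) • x1) = γ1 * a1 ∧ E2.nrm ((γ2:ℂ) • x2) = γ2 * a2 := by
    intro γ1 γ2 hγ1 hγ2 hprod
    refine ⟨E1.smul_mem _ _ hx1, E2.smul_mem _ _ hx2, ?_, ?_, ?_⟩
    · intro t
      rw [abs_smul_apply, abs_smul_apply, abs_of_pos hγ1, abs_of_pos hγ2,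
        Real.mul_rpow hγ1.le (norm_nonneg _),
        Real.mul_rpow hγ2.le (norm_nonneg _)]
      rw [hfac t]
      linear_combination (-(‖x1 t‖ ^ (1-θ) * ‖x2 t‖ ^ θ)) * hprod
    · rw [E1.nrm_smul _ _ hx1, Complex.norm_real, Real.norm_eq_abs, abs_of_pos hγ1]
    · rw [E2.nrm_smul _ _ hx2, Complex.norm_real, Real.norm_eq_abs, abs_of_pos hγ2]
  rcases eq_or_lt_of_le (calSet_mem_nonneg (⟨x1, x2, hx1, hx2, hfac, hc⟩ :
      c ∈ {c : ℝ | ∃ x1 x2, E1.mem x1 ∧ E2.mem x2 ∧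
        (∀ t, ‖f t‖ = ‖x1 t‖ ^ (1 - θ) * ‖x2 t‖ ^ θ) ∧
        c = E1.nrm x1 ^ (1 - θ) * E2.nrm x2 ^ θ})) with hc0 | hc0
  · -- c = 0 : one of the norms is zero
    have : a1 ^ (1-θ) = 0 ∨ a2 ^ θ = 0 := by
      rw [hc] at hc0; exact mul_eq_zero.1 hc0.symm
    rcases this with h0 | h0
    · -- a1 = 0
      have ha10 : a1 = 0 := ((Real.rpow_eq_zero_iff_of_nonneg ha1').1 h0).1
      set δ := ε / (a2 + 1) with hδ
      have hδ0 : 0 < δ := by positivity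
      have hγ10 : (0:ℝ) < δ ^ (-(θ/(1-θ))) := Real.rpow_pos_of_pos hδ0 _
      obtain ⟨m1, m2, fac, n1, n2⟩ := main (δ ^ (-(θ/(1-θ)))) δ hγ10 hδ0 (by
        rw [← Real.rpow_mul hδ0.le, ← Real.rpow_add hδ0]
        have hexp : -(θ/(1-θ)) * (1-θ) + θ = 0 := by
          rw [neg_mul, div_mul_cancel₀ θ (ne_of_gt h1θ)]; ring
        rw [hexp, Real.rpow_zero])
      refine ⟨_, _, m1, m2, fac, ?_, ?_⟩
      · rw [n1, ha10, mul_zero]; linarith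
      · rw [n2]
        have : δ * a2 ≤ ε := by
          rw [hδ, div_mul_eq_mul_div, div_le_iff₀ (by positivity)]
          nlinarith
        linarith
    · -- a2 = 0
      have ha20 : a2 = 0 := ((Real.rpow_eq_zero_iff_of_nonneg ha2').1 h0).1
      set δ := ε / (a1 + 1) with hδ
      have hδ0 : 0 < δ := by positivity
      have hγ20 : (0:ℝ) < δ ^ (-((1-θ)/θ)) := Real.rpow_pos_of_pos hδ0 _
      obtain ⟨m1, m2, fac, n1, n2⟩ := main δ (δ ^ (-((1-θ)/θ))) hδ0 hγ20 (by
        rw [← Real.rpow_mul hδ0.le, ← Real.rpow_add hδ0]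
        have hexp : (1-θ) + -((1-θ)/θ) * θ = 0 := by
          rw [neg_mul, div_mul_cancel₀ (1-θ) (ne_of_gt hθ0)]; ring
        rw [hexp, Real.rpow_zero])
      refine ⟨_, _, m1, m2, fac, ?_, ?_⟩
      · rw [n1]
        have : δ * a1 ≤ ε := by
          rw [hδ, div_mul_eq_mul_div, div_le_iff₀ (by positivity)]
          nlinarith
        linarith
      · rw [n2, ha20, mul_zero]; linarith
  · -- c > 0
    have ha1p : 0 < a1 := by
      rcases eq_or_lt_of_le ha1' with h | h
      · exfalso
        rw [hc, ← h, Real.zero_rpow (ne_of_gt h1θ), zero_mul] at hc0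
        exact lt_irrefl _ hc0
      · exact h
    have ha2p : 0 < a2 := by
      rcases eq_or_lt_of_le ha2' with h | h
      · exfalso
        rw [hc, ← h, Real.zero_rpow (ne_of_gt hθ0), mul_zero] at hc0
        exact lt_irrefl _ hc0
      · exact h
    obtain ⟨m1, m2, fac, n1, n2⟩ := main (c/a1) (c/a2) (by positivity) (by positivity) (by
      rw [Real.div_rpow hc0.le ha1', Real.div_rpow hc0.le ha2']
      rw [div_mul_div_comm, rpow_split hc0.le, hc]
      exact div_self (by rw [hc] at hc0; exact ne_of_gt hc0))
    have hclt' : c < CN + ε := hclt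
    refine ⟨_, _, m1, m2, fac, ?_, ?_⟩
    · rw [n1, div_mul_cancel₀ _ (ne_of_gt ha1p)]; linarith
    · rw [n2, div_mul_cancel₀ _ (ne_of_gt ha2p)]; linarith

end Cal2
section Cal3
variable {α : ℝ≥0∞} {E1 E2 : QBIdealSpace (mIoo α)} {θ : ℝ} (hθ0 : 0 < θ) (hθ1 : θ < 1)

include hθ0 hθ1 in
lemma factor_dominated {f : ℝ → ℂ} (hfm : Measurable f) {v1 v2 : ℝ → ℝ}
    (hv1m : Measurable v1) (hv2m : Measurable v2) (hv1 : ∀ t, 0 ≤ v1 t) (hv2 : ∀ t, 0 ≤ v2 t)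
    {g1 g2 : ℝ → ℂ} (hg1 : E1.mem g1) (hg2 : E2.mem g2)
    (hdom : ∀ᵐ t ∂(mIoo α), ‖f t‖ ≤ v1 t ^ (1-θ) * v2 t ^ θ)
    (hle1 : ∀ᵐ t ∂(mIoo α), v1 t ≤ ‖g1 t‖)
    (hle2 : ∀ᵐ t ∂(mIoo α), v2 t ≤ ‖g2 t‖) :
    calMem E1.mem E2.mem θ f ∧
    calNrm E1.mem E1.nrm E2.mem E2.nrm θ f ≤ E1.nrm g1 ^ (1-θ) * E2.nrm g2 ^ θ := by
  have h1θ : (0:ℝ) < 1 - θ := by linarith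
  set B : Set ℝ := {t | ‖f t‖ ≤ v1 t ^ (1-θ) * v2 t ^ θ ∧
    v1 t ≤ ‖g1 t‖ ∧ v2 t ≤ ‖g2 t‖} with hBdef
  have habsf : Measurable fun t => ‖f t‖ := hfm.cabs
  have hDm : Measurable fun t => v1 t ^ (1-θ) * v2 t ^ θ :=
    ((Real.continuous_rpow_const h1θ.le).measurable.comp hv1m).mul
      ((Real.continuous_rpow_const hθ0.le).measurable.comp hv2m)
  have hB : MeasurableSet B := by
    refine MeasurableSet.inter (measurableSet_le habsf hDm) ?_
    exact (measurableSet_le hv1m (E1.measurable_of_mem g1 hg1).cabs).inter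
      (measurableSet_le hv2m (E2.measurable_of_mem g2 hg2).cabs)
  have hBae : ∀ᵐ t ∂(mIoo α), t ∈ B := by
    filter_upwards [hdom, hle1, hle2] with t h1 h2 h3
    exact ⟨h1, h2, h3⟩
  set D : ℝ → ℝ := fun t => v1 t ^ (1-θ) * v2 t ^ θ with hDdef
  have hD0 : ∀ t, 0 ≤ D t := fun t =>
    mul_nonneg (Real.rpow_nonneg (hv1 t) _) (Real.rpow_nonneg (hv2 t) _)
  set w : ℝ → ℝ := fun t => ‖f t‖ / D t with hwdef
  have hw0 : ∀ t, 0 ≤ w t := fun t => div_nonneg (norm_nonneg _) (hD0 t)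
  have hw1 : ∀ t ∈ B, w t ≤ 1 := by
    intro t ht
    rcases eq_or_lt_of_le (hD0 t) with hD | hD
    · have hDt : w t = ‖f t‖ / D t := rfl
      rw [hDt, ← hD, div_zero]; norm_num
    · exact div_le_one_of_le₀ ht.1 hD.le
  set x1 : ℝ → ℝ := fun t => if t ∈ B then w t * v1 t else ‖f t‖ with hx1def
  set x2 : ℝ → ℝ := fun t => if t ∈ B then w t * v2 t else ‖f t‖ with hx2def
  have hx1m : Measurable x1 := Measurable.ite hB ((habsf.div hDm).mul hv1m) habsf
  have hx2m : Measurable x2 := Measurable.ite hB ((habsf.div hDm).mul hv2m) habsf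
  have hx1nn : ∀ t, 0 ≤ x1 t := by
    intro t; by_cases ht : t ∈ B <;> simp only [hx1def, ht, if_true, if_false]
    · exact mul_nonneg (hw0 t) (hv1 t)
    · exact norm_nonneg _
  have hx2nn : ∀ t, 0 ≤ x2 t := by
    intro t; by_cases ht : t ∈ B <;> simp only [hx2def, ht, if_true, if_false]
    · exact mul_nonneg (hw0 t) (hv2 t)
    · exact norm_nonneg _
  have hfac : ∀ t, ‖f t‖ =
      ‖(x1 t : ℂ)‖ ^ (1-θ) * ‖(x2 t : ℂ)‖ ^ θ := by
    intro t
    rw [Complex.norm_real, Real.norm_eq_abs, Complex.norm_real, Real.norm_eq_abs, abs_of_nonneg (hx1nn t),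
      abs_of_nonneg (hx2nn t)]
    by_cases ht : t ∈ B
    · simp only [hx1def, hx2def, ht, if_true]
      rw [Real.mul_rpow (hw0 t) (hv1 t), Real.mul_rpow (hw0 t) (hv2 t)]
      have : w t ^ (1-θ) * v1 t ^ (1-θ) * (w t ^ θ * v2 t ^ θ)
          = (w t ^ (1-θ) * w t ^ θ) * D t := by rw [hDdef]; ring
      rw [this, rpow_split (hw0 t)]
      rcases eq_or_lt_of_le (hD0 t) with hD | hD
      · have hDt : D t = 0 := hD.symm
        have hf0 : ‖f t‖ = 0 :=
          le_antisymm (ht.1.trans (le_of_eq hDt)) (norm_nonneg _)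
        rw [hf0, hDt, mul_zero]
      · have hwt : w t = ‖f t‖ / D t := rfl
        rw [hwt, div_mul_cancel₀ _ (ne_of_gt (show (0:ℝ) < D t from hD))]
    · simp only [hx1def, hx2def, ht, if_false]
      rw [rpow_split (norm_nonneg (f t))]
  have hmem1 := E1.mem_ofReal hx1m hg1 (by
    filter_upwards [hBae] with t ht
    rw [abs_of_nonneg (hx1nn t)]
    simp only [hx1def, ht, if_true]
    exact le_trans (mul_le_of_le_one_left (hv1 t) (hw1 t ht)) ht.2.1)
  have hmem2 := E2.mem_ofReal hx2m hg2 (by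
    filter_upwards [hBae] with t ht
    rw [abs_of_nonneg (hx2nn t)]
    simp only [hx2def, ht, if_true]
    exact le_trans (mul_le_of_le_one_left (hv2 t) (hw1 t ht)) ht.2.2)
  refine ⟨⟨hfm, _, _, hmem1.1, hmem2.1, hfac⟩, ?_⟩
  refine le_trans (calNrm_le hmem1.1 hmem2.1 hfac) ?_
  have n1 := E1.nrm_nonneg (fun t => (x1 t : ℂ))
  have n2 := E2.nrm_nonneg (fun t => (x2 t : ℂ))
  exact mul_le_mul (Real.rpow_le_rpow n1 hmem1.2 h1θ.le)
    (Real.rpow_le_rpow n2 hmem2.2 hθ0.le) (Real.rpow_nonneg n2 θ)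
    (Real.rpow_nonneg (E1.nrm_nonneg g1) _)
end Cal3
section Cal4
variable {α : ℝ≥0∞} {E1 E2 : QBIdealSpace (mIoo α)} {θ : ℝ} (hθ0 : 0 < θ) (hθ1 : θ < 1)

lemma QBIdealSpace.mem_abs_add {m' : Measure ℝ} (E : QBIdealSpace m') {p q : ℝ → ℂ}
    (hp : E.mem p) (hq : E.mem q) :
    E.mem (fun t => ((‖p t‖ + ‖q t‖ : ℝ) : ℂ)) ∧
    E.nrm (fun t => ((‖p t‖ + ‖q t‖ : ℝ) : ℂ)) ≤
      E.qc * (E.nrm p + E.nrm q) := by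
  have h1 := E.mem_ofReal ((E.measurable_of_mem p hp).cabs) hp
    (ae_of_all _ fun t => by simp [abs_of_nonneg (norm_nonneg (p t))])
  have h2 := E.mem_ofReal ((E.measurable_of_mem q hq).cabs) hq
    (ae_of_all _ fun t => by simp [abs_of_nonneg (norm_nonneg (q t))])
  have heq : (fun t => ((‖p t‖ + ‖q t‖ : ℝ) : ℂ)) =
      (fun t => ((‖p t‖ : ℝ) : ℂ)) + (fun t => ((‖q t‖ : ℝ) : ℂ)) := by
    funext t; push_cast; rfl
  rw [heq]
  refine ⟨E.add_mem _ _ h1.1 h2.1, ?_⟩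
  refine le_trans (E.nrm_add_le _ _ h1.1 h2.1) ?_
  have hqc : 0 < E.qc := lt_of_lt_of_le one_pos E.one_le_qc
  nlinarith [h1.2, h2.2]

include hθ0 hθ1 in
lemma cal_add {f g : ℝ → ℂ} (hf : calMem E1.mem E2.mem θ f) (hg : calMem E1.mem E2.mem θ g) :
    calMem E1.mem E2.mem θ (f + g) ∧
    calNrm E1.mem E1.nrm E2.mem E2.nrm θ (f + g) ≤
      max E1.qc E2.qc * (calNrm E1.mem E1.nrm E2.mem E2.nrm θ f +
        calNrm E1.mem E1.nrm E2.mem E2.nrm θ g) := by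
  have h1θ : (0:ℝ) < 1 - θ := by linarith
  set Q := max E1.qc E2.qc with hQdef
  have hQ1 : (1:ℝ) ≤ Q := le_trans E1.one_le_qc (le_max_left _ _)
  have hQ0 : (0:ℝ) < Q := lt_of_lt_of_le one_pos hQ1
  set CNf := calNrm E1.mem E1.nrm E2.mem E2.nrm θ f with hCNf
  set CNg := calNrm E1.mem E1.nrm E2.mem E2.nrm θ g with hCNg
  have hCNf0 : 0 ≤ CNf := calNrm_nonneg f
  have hCNg0 : 0 ≤ CNg := calNrm_nonneg g
  have key : ∀ ε : ℝ, 0 < ε →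
      calMem E1.mem E2.mem θ (f + g) ∧
      calNrm E1.mem E1.nrm E2.mem E2.nrm θ (f + g) ≤ Q * (CNf + CNg + 2*ε) := by
    intro ε hε
    obtain ⟨f1, f2, hf1, hf2, hffac, hf1n, hf2n⟩ := exists_good_factor hθ0 hθ1 hf hε
    obtain ⟨g1, g2, hg1, hg2, hgfac, hg1n, hg2n⟩ := exists_good_factor hθ0 hθ1 hg hε
    set v1 : ℝ → ℝ := fun t => ‖f1 t‖ + ‖g1 t‖ with hv1def
    set v2 : ℝ → ℝ := fun t => ‖f2 t‖ + ‖g2 t‖ with hv2def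
    have hv1m : Measurable v1 := (E1.measurable_of_mem f1 hf1).cabs.add
      (E1.measurable_of_mem g1 hg1).cabs
    have hv2m : Measurable v2 := (E2.measurable_of_mem f2 hf2).cabs.add
      (E2.measurable_of_mem g2 hg2).cabs
    have hv1nn : ∀ t, 0 ≤ v1 t := fun t => add_nonneg (norm_nonneg _) (norm_nonneg _)
    have hv2nn : ∀ t, 0 ≤ v2 t := fun t => add_nonneg (norm_nonneg _) (norm_nonneg _)
    obtain ⟨hG1, hG1n⟩ := E1.mem_abs_add hf1 hg1
    obtain ⟨hG2, hG2n⟩ := E2.mem_abs_add hf2 hg2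
    have hdom : ∀ᵐ t ∂(mIoo α), ‖(f+g) t‖ ≤ v1 t ^ (1-θ) * v2 t ^ θ := by
      refine ae_of_all _ fun t => ?_
      calc ‖(f+g) t‖ ≤ ‖f t‖ + ‖g t‖ :=
            norm_add_le _ _
        _ = ‖f1 t‖^(1-θ)*‖f2 t‖^θ
            + ‖g1 t‖^(1-θ)*‖g2 t‖^θ := by rw [hffac t, hgfac t]
        _ ≤ _ := holder2 hθ0 hθ1 (norm_nonneg _) (norm_nonneg _)
            (norm_nonneg _) (norm_nonneg _)
    have := factor_dominated hθ0 hθ1 (hf.1.add hg.1) hv1m hv2m hv1nn hv2nn hG1 hG2 hdom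
      (ae_of_all _ fun t => by rw [Complex.norm_real, Real.norm_eq_abs, abs_of_nonneg (hv1nn t)])
      (ae_of_all _ fun t => by rw [Complex.norm_real, Real.norm_eq_abs, abs_of_nonneg (hv2nn t)])
    refine ⟨this.1, le_trans this.2 ?_⟩
    have hb1 : E1.nrm (fun t => ((v1 t : ℝ) : ℂ)) ≤ Q * (CNf + CNg + 2*ε) := by
      refine le_trans hG1n ?_
      have : E1.qc ≤ Q := le_max_left _ _
      nlinarith [lt_of_lt_of_le one_pos E1.one_le_qc]
    have hb2 : E2.nrm (fun t => ((v2 t : ℝ) : ℂ)) ≤ Q * (CNf + CNg + 2*ε) := by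
      refine le_trans hG2n ?_
      have : E2.qc ≤ Q := le_max_right _ _
      nlinarith [lt_of_lt_of_le one_pos E2.one_le_qc]
    calc E1.nrm (fun t => ((v1 t : ℝ) : ℂ)) ^ (1-θ) * E2.nrm (fun t => ((v2 t : ℝ) : ℂ)) ^ θ
        ≤ (Q * (CNf + CNg + 2*ε)) ^ (1-θ) * (Q * (CNf + CNg + 2*ε)) ^ θ :=
          mul_le_mul (Real.rpow_le_rpow (E1.nrm_nonneg _) hb1 h1θ.le)
            (Real.rpow_le_rpow (E2.nrm_nonneg _) hb2 hθ0.le)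
            (Real.rpow_nonneg (E2.nrm_nonneg _) _)
            (Real.rpow_nonneg (by positivity) _)
      _ = Q * (CNf + CNg + 2*ε) := rpow_split (by positivity)
  refine ⟨(key 1 one_pos).1, ?_⟩
  refine le_of_forall_pos_le_add fun ε hε => ?_
  have h := (key (ε / (2*Q)) (by positivity)).2
  calc calNrm E1.mem E1.nrm E2.mem E2.nrm θ (f + g)
      ≤ Q * (CNf + CNg + 2*(ε/(2*Q))) := h
    _ = Q * (CNf + CNg) + ε := by field_simp
end Cal4
section Cal5
variable {α : ℝ≥0∞} {E1 E2 : QBIdealSpace (mIoo α)} {θ : ℝ} (hθ0 : 0 < θ) (hθ1 : θ < 1)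

omit hθ0 in
include hθ1 in
lemma calMem_zero : calMem E1.mem E2.mem θ (0 : ℝ → ℂ) := by
  refine ⟨measurable_const, 0, 0, E1.zero_mem, E2.zero_mem, fun t => ?_⟩
  simp [Real.zero_rpow (by linarith : (1:ℝ)-θ ≠ 0)]

omit hθ0 in
include hθ1 in
lemma calNrm_zero : calNrm E1.mem E1.nrm E2.mem E2.nrm θ (0 : ℝ → ℂ) = 0 := by
  refine le_antisymm ?_ (calNrm_nonneg _)
  have h := calNrm_le (E1 := E1) (E2 := E2) E1.zero_mem E2.zero_mem
    (fun t => by simp [Real.zero_rpow (by linarith : (1:ℝ)-θ ≠ 0)] :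
      ∀ t, ‖(0 : ℝ → ℂ) t‖ =
        ‖(0:ℝ→ℂ) t‖ ^ (1-θ) * ‖(0:ℝ→ℂ) t‖ ^ θ)
  rw [E1.nrm_zero, E2.nrm_zero, Real.zero_rpow (by linarith : (1:ℝ)-θ ≠ 0), zero_mul] at h
  exact h

include hθ0 hθ1 in
lemma calNrm_smul_le (c : ℂ) {f : ℝ → ℂ} (hf : calMem E1.mem E2.mem θ f) :
    calMem E1.mem E2.mem θ (c • f) ∧
    calNrm E1.mem E1.nrm E2.mem E2.nrm θ (c • f) ≤
      ‖c‖ * calNrm E1.mem E1.nrm E2.mem E2.nrm θ f := by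
  obtain ⟨hfm, x1, x2, hx1, hx2, hfac⟩ := hf
  set r := ‖c‖ with hr
  have hr0 : 0 ≤ r := norm_nonneg c
  have habs : ∀ (x : ℝ → ℂ) t, ‖(((r:ℝ):ℂ) • x) t‖ = r * ‖x t‖ := by
    intro x t
    simp [Pi.smul_apply, smul_eq_mul, map_mul, Complex.norm_real, Real.norm_eq_abs, abs_of_nonneg hr0]
  have hfac' : ∀ y1 y2 : ℝ → ℂ, E1.mem y1 → E2.mem y2 →
      (∀ t, ‖f t‖ = ‖y1 t‖ ^ (1-θ) * ‖y2 t‖ ^ θ) →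
      (∀ t, ‖(c • f) t‖ =
        ‖(((r:ℝ):ℂ) • y1) t‖ ^ (1-θ) * ‖(((r:ℝ):ℂ) • y2) t‖ ^ θ) := by
    intro y1 y2 _ _ hy t
    rw [habs, habs, Real.mul_rpow hr0 (norm_nonneg _),
      Real.mul_rpow hr0 (norm_nonneg _)]
    have : ‖(c • f) t‖ = r * ‖f t‖ := by
      simp [Pi.smul_apply, smul_eq_mul, map_mul, hr]
    rw [this, hy t]
    have hsp := rpow_split (θ := θ) hr0
    linear_combination (-(‖y1 t‖ ^ (1-θ) * ‖y2 t‖ ^ θ)) * hsp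
  have hmem : calMem E1.mem E2.mem θ (c • f) := by
    refine ⟨hfm.const_smul c, ((r:ℝ):ℂ) • x1, ((r:ℝ):ℂ) • x2,
      E1.smul_mem _ _ hx1, E2.smul_mem _ _ hx2, hfac' x1 x2 hx1 hx2 hfac⟩
  refine ⟨hmem, ?_⟩
  rcases eq_or_lt_of_le hr0 with hr0' | hr0'
  · -- r = 0 : c = 0
    have hc0 : c = 0 := by
      have := norm_eq_zero.1 hr0'.symm
      exact this
    rw [hc0, zero_smul, calNrm_zero hθ1, hr, hc0]
    simp
  · -- r > 0
    rw [← div_le_iff₀' hr0']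
    refine le_csInf ⟨_, ⟨x1, x2, hx1, hx2, hfac, rfl⟩⟩ ?_
    rintro b ⟨y1, y2, hy1, hy2, hyfac, rfl⟩
    rw [div_le_iff₀' hr0']
    have hle := calNrm_le (E1.smul_mem (((r:ℝ):ℂ)) y1 hy1) (E2.smul_mem (((r:ℝ):ℂ)) y2 hy2)
      (hfac' y1 y2 hy1 hy2 hyfac)
    rw [E1.nrm_smul _ _ hy1, E2.nrm_smul _ _ hy2, Complex.norm_real, Real.norm_eq_abs, abs_of_nonneg hr0] at hle
    refine le_trans hle (le_of_eq ?_)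
    rw [Real.mul_rpow hr0 (E1.nrm_nonneg y1), Real.mul_rpow hr0 (E2.nrm_nonneg y2)]
    have h1 := rpow_split (θ := θ) hr0
    linear_combination (E1.nrm y1 ^ (1-θ) * E2.nrm y2 ^ θ) * h1

include hθ0 hθ1 in
lemma calNrm_smul (c : ℂ) {f : ℝ → ℂ} (hf : calMem E1.mem E2.mem θ f) :
    calNrm E1.mem E1.nrm E2.mem E2.nrm θ (c • f) =
      ‖c‖ * calNrm E1.mem E1.nrm E2.mem E2.nrm θ f := by
  rcases eq_or_ne c 0 with rfl | hc
  · rw [zero_smul, calNrm_zero hθ1]; simp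
  refine le_antisymm (calNrm_smul_le hθ0 hθ1 c hf).2 ?_
  have h2 := (calNrm_smul_le hθ0 hθ1 c⁻¹ (calNrm_smul_le hθ0 hθ1 c hf).1).2
  rw [inv_smul_smul₀ hc] at h2
  rw [norm_inv] at h2
  have hr : 0 < ‖c‖ := norm_pos_iff.2 hc
  calc ‖c‖ * calNrm E1.mem E1.nrm E2.mem E2.nrm θ f
      ≤ ‖c‖ * ((‖c‖)⁻¹ *
          calNrm E1.mem E1.nrm E2.mem E2.nrm θ (c • f)) :=
        mul_le_mul_of_nonneg_left h2 hr.le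
    _ = calNrm E1.mem E1.nrm E2.mem E2.nrm θ (c • f) := by field_simp
end Cal5
section Cal6
variable {α : ℝ≥0∞} {E1 E2 : QBIdealSpace (mIoo α)} {θ : ℝ} (hθ0 : 0 < θ) (hθ1 : θ < 1)

include hθ0 hθ1 in
lemma cal_ideal {f g : ℝ → ℂ} (hg : calMem E1.mem E2.mem θ g) (hfm : Measurable f)
    (hle : ∀ᵐ t ∂(mIoo α), ‖f t‖ ≤ ‖g t‖) :
    calMem E1.mem E2.mem θ f ∧
    calNrm E1.mem E1.nrm E2.mem E2.nrm θ f ≤ calNrm E1.mem E1.nrm E2.mem E2.nrm θ g := by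
  have key : ∀ g1 g2 : ℝ → ℂ, E1.mem g1 → E2.mem g2 →
      (∀ t, ‖g t‖ = ‖g1 t‖ ^ (1-θ) * ‖g2 t‖ ^ θ) →
      calMem E1.mem E2.mem θ f ∧
      calNrm E1.mem E1.nrm E2.mem E2.nrm θ f ≤ E1.nrm g1 ^ (1-θ) * E2.nrm g2 ^ θ := by
    intro g1 g2 hg1 hg2 hgfac
    refine factor_dominated hθ0 hθ1 hfm
      (E1.measurable_of_mem g1 hg1).cabs (E2.measurable_of_mem g2 hg2).cabs
      (fun t => norm_nonneg _) (fun t => norm_nonneg _) hg1 hg2 ?_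
      (ae_of_all _ fun t => le_rfl) (ae_of_all _ fun t => le_rfl)
    filter_upwards [hle] with t ht
    rw [← hgfac t]; exact ht
  obtain ⟨hgm, g1, g2, hg1, hg2, hgfac⟩ := hg
  refine ⟨(key g1 g2 hg1 hg2 hgfac).1, ?_⟩
  refine le_csInf ⟨_, ⟨g1, g2, hg1, hg2, hgfac, rfl⟩⟩ ?_
  rintro b ⟨y1, y2, hy1, hy2, hyfac, rfl⟩
  exact (key y1 y2 hy1 hy2 hyfac).2

include hθ0 hθ1 in
lemma calNrm_eq_zero_of_ae {f : ℝ → ℂ} (hf : calMem E1.mem E2.mem θ f)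
    (h0 : f =ᵐ[mIoo α] 0) : calNrm E1.mem E1.nrm E2.mem E2.nrm θ f = 0 := by
  obtain ⟨hfm, x1, x2, hx1, hx2, hfac⟩ := hf
  set x1' : ℝ → ℂ := fun t => if f t = 0 then 0 else x1 t with hx1'def
  have hx1'm : Measurable x1' :=
    Measurable.ite (hfm (measurableSet_singleton 0)) measurable_const
      (E1.measurable_of_mem x1 hx1)
  have hmem1 : E1.mem x1' ∧ E1.nrm x1' ≤ E1.nrm x1 := by
    refine E1.ideal x1' x1 hx1 hx1'm (ae_of_all _ fun t => ?_)
    by_cases ht : f t = 0 <;> simp [hx1'def, ht]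
  have hzero : E1.nrm x1' = 0 := by
    refine (E1.nrm_eq_zero_iff x1' hmem1.1).2 ?_
    filter_upwards [h0] with t ht
    simp only [Pi.zero_apply] at ht
    simp [hx1'def, ht]
  have hfac' : ∀ t, ‖f t‖ =
      ‖x1' t‖ ^ (1-θ) * ‖x2 t‖ ^ θ := by
    intro t
    by_cases ht : f t = 0
    · simp [hx1'def, ht, Real.zero_rpow (by linarith : (1:ℝ)-θ ≠ 0)]
    · simp only [hx1'def, ht, if_false]
      exact hfac t
  have := calNrm_le hmem1.1 hx2 hfac'
  rw [hzero, Real.zero_rpow (by linarith : (1:ℝ)-θ ≠ 0), zero_mul] at this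
  exact le_antisymm this (calNrm_nonneg f)

include hθ0 hθ1 in
lemma ae_zero_of_calNrm_zero
    (hemb1 : ∀ u : ℕ → ℝ → ℂ, (∀ n, E1.mem (u n)) →
      Tendsto (fun n => E1.nrm (u n)) atTop (nhds 0) →
      MeasureTheory.TendstoInMeasure (mIoo α) u atTop 0)
    (hemb2 : ∀ u : ℕ → ℝ → ℂ, (∀ n, E2.mem (u n)) →
      Tendsto (fun n => E2.nrm (u n)) atTop (nhds 0) →
      MeasureTheory.TendstoInMeasure (mIoo α) u atTop 0)
    {f : ℝ → ℂ} (hf : calMem E1.mem E2.mem θ f)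
    (h : calNrm E1.mem E1.nrm E2.mem E2.nrm θ f = 0) : f =ᵐ[mIoo α] 0 := by
  have key : ∀ n : ℕ, ∃ x1 x2, E1.mem x1 ∧ E2.mem x2 ∧
      (∀ t, ‖f t‖ = ‖x1 t‖ ^ (1-θ) * ‖x2 t‖ ^ θ) ∧
      E1.nrm x1 ≤ 1/(n+1) ∧ E2.nrm x2 ≤ 1/(n+1) := by
    intro n
    obtain ⟨x1, x2, h1, h2, h3, h4, h5⟩ := exists_good_factor hθ0 hθ1 hf
      (show (0:ℝ) < 1/(n+1) by positivity)
    rw [h, zero_add] at h4 h5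
    exact ⟨x1, x2, h1, h2, h3, h4, h5⟩
  choose u v hu hv hfac hun hvn using key
  have htend : ∀ (E : QBIdealSpace (mIoo α)) (w : ℕ → ℝ → ℂ),
      (∀ n, E.nrm (w n) ≤ 1/(n+1)) → Tendsto (fun n => E.nrm (w n)) atTop (nhds 0) := by
    intro E w hw
    refine tendsto_of_tendsto_of_tendsto_of_le_of_le tendsto_const_nhds
      tendsto_one_div_add_atTop_nhds_zero_nat (fun n => E.nrm_nonneg _) (fun n => ?_)
    exact_mod_cast hw n
  obtain ⟨ns, hns, hae1⟩ := (hemb1 u hu (htend E1 u hun)).exists_seq_tendsto_ae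
  have hv' : ∀ j, E2.mem (v (ns j)) := fun j => hv (ns j)
  have hvn' : Tendsto (fun j => E2.nrm (v (ns j))) atTop (nhds 0) := by
    refine tendsto_of_tendsto_of_tendsto_of_le_of_le tendsto_const_nhds
      tendsto_one_div_add_atTop_nhds_zero_nat (fun j => E2.nrm_nonneg _) (fun j => ?_)
    calc E2.nrm (v (ns j)) ≤ 1/(ns j + 1) := hvn (ns j)
      _ ≤ 1/(j+1) := by
        apply one_div_le_one_div_of_le (by positivity)
        have : (j:ℝ) ≤ (ns j : ℝ) := by exact_mod_cast hns.le_apply (x := j)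
        linarith
  obtain ⟨ms, hms, hae2⟩ := (hemb2 _ hv' hvn').exists_seq_tendsto_ae
  have hae1' : ∀ᵐ t ∂(mIoo α), Tendsto (fun i => u (ns (ms i)) t) atTop (nhds 0) := by
    filter_upwards [hae1] with t ht
    exact ht.comp hms.tendsto_atTop
  have hae2' : ∀ᵐ t ∂(mIoo α), Tendsto (fun i => v (ns (ms i)) t) atTop (nhds 0) := by
    filter_upwards [hae2] with t ht
    simpa using ht
  filter_upwards [hae1', hae2'] with t h1 h2
  have hA : Tendsto (fun i => ‖u (ns (ms i)) t‖) atTop (nhds 0) := by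
    simpa using h1.norm
  have hB : Tendsto (fun i => ‖v (ns (ms i)) t‖) atTop (nhds 0) := by
    simpa using h2.norm
  have hprod : Tendsto (fun i => ‖u (ns (ms i)) t‖ ^ (1-θ)
      * ‖v (ns (ms i)) t‖ ^ θ) atTop (nhds 0) := by
    have hA' := hA.rpow_const (p := 1-θ) (Or.inr (by linarith))
    have hB' := hB.rpow_const (p := θ) (Or.inr hθ0.le)
    rw [Real.zero_rpow (by linarith : (1:ℝ)-θ ≠ 0)] at hA'
    rw [Real.zero_rpow (ne_of_gt hθ0)] at hB'
    simpa using hA'.mul hB'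
  have hconst : Tendsto (fun _ : ℕ => ‖f t‖) atTop (nhds (‖f t‖)) :=
    tendsto_const_nhds
  have : ‖f t‖ = 0 := by
    refine tendsto_nhds_unique ?_ hprod
    refine hconst.congr fun i => ?_
    exact hfac (ns (ms i)) t
  simpa using norm_eq_zero.1 this
end Cal6
section Cal7

lemma QBIdealSpace.mem_sub {m' : Measure ℝ} (E : QBIdealSpace m') {f g : ℝ → ℂ}
    (hf : E.mem f) (hg : E.mem g) : E.mem (f - g) := by
  rw [sub_eq_add_neg]; exact E.add_mem _ _ hf (E.mem_neg hg)

lemma QBIdealSpace.nrm_sub_symm {m' : Measure ℝ} (E : QBIdealSpace m') {f g : ℝ → ℂ}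
    (hf : E.mem f) (hg : E.mem g) : E.nrm (f - g) = E.nrm (g - f) := by
  rw [← neg_sub g f]
  exact E.nrm_neg (E.mem_sub hg hf)

lemma geom4 : ∀ m : ℕ, ∑ k ∈ Finset.range m, ((4:ℝ)⁻¹)^k ≤ 2 - 2*(4:ℝ)⁻¹^m := by
  intro m
  induction m with
  | zero => simp
  | succ m ih =>
    rw [Finset.sum_range_succ]
    have h4 : ((4:ℝ)⁻¹)^(m+1) ≤ (4:ℝ)⁻¹^m := by
      apply pow_le_pow_of_le_one (by norm_num) (by norm_num) (by omega)
    have : ((4:ℝ)⁻¹)^(m+1) = (4:ℝ)⁻¹^m * 4⁻¹ := by ring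
    nlinarith [pow_nonneg (show (0:ℝ) ≤ 4⁻¹ by norm_num) m]

lemma geom_aux {Q : ℝ} (hQ1 : 1 ≤ Q) (p : ℕ) (m : ℕ) :
    ∑ k ∈ Finset.range m, Q^(k+1) * (2 * ((4*Q)⁻¹)^(p+k+1)) ≤ (4:ℝ)⁻¹^p := by
  have hQ0 : 0 < Q := lt_of_lt_of_le one_pos hQ1
  have hterm : ∀ k, Q^(k+1) * (2 * ((4*Q)⁻¹)^(p+k+1)) ≤ 2 * (4:ℝ)⁻¹^(p+1) * (4:ℝ)⁻¹^k := by
    intro k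
    have hsplit : ((4*Q)⁻¹ : ℝ)^(p+k+1) = (4:ℝ)⁻¹^(p+k+1) * (Q⁻¹)^(p+k+1) := by
      rw [mul_inv, mul_pow]
    rw [hsplit]
    have hq : Q^(k+1) * (Q⁻¹)^(p+k+1) ≤ 1 := by
      rw [inv_pow, ← div_eq_mul_inv, div_le_one (by positivity)]
      apply pow_le_pow_right₀ hQ1 (by omega)
    have h4pos : (0:ℝ) < (4:ℝ)⁻¹^(p+k+1) := by positivity
    calc Q^(k+1) * (2 * ((4:ℝ)⁻¹^(p+k+1) * (Q⁻¹)^(p+k+1)))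
        = 2 * (4:ℝ)⁻¹^(p+k+1) * (Q^(k+1) * (Q⁻¹)^(p+k+1)) := by ring
      _ ≤ 2 * (4:ℝ)⁻¹^(p+k+1) * 1 := by
          apply mul_le_mul_of_nonneg_left hq (by positivity)
      _ = 2 * (4:ℝ)⁻¹^(p+1) * (4:ℝ)⁻¹^k := by
          rw [mul_one]
          rw [show p+k+1 = (p+1)+k by omega, pow_add]
          ring
  calc ∑ k ∈ Finset.range m, Q^(k+1) * (2 * ((4*Q)⁻¹)^(p+k+1))
      ≤ ∑ k ∈ Finset.range m, 2 * (4:ℝ)⁻¹^(p+1) * (4:ℝ)⁻¹^k :=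
        Finset.sum_le_sum fun k _ => hterm k
    _ = 2 * (4:ℝ)⁻¹^(p+1) * ∑ k ∈ Finset.range m, (4:ℝ)⁻¹^k := by
        rw [Finset.mul_sum]
    _ ≤ 2 * (4:ℝ)⁻¹^(p+1) * 2 := by
        apply mul_le_mul_of_nonneg_left (le_trans (geom4 m) (by nlinarith [pow_nonneg (show (0:ℝ) ≤ 4⁻¹ by norm_num) m])) (by positivity)
    _ = (4:ℝ)⁻¹^p := by
        rw [pow_succ]
        ring

variable {α : ℝ≥0∞}

lemma tail_control (E : QBIdealSpace (mIoo α))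
    (hemb : ∀ u : ℕ → ℝ → ℂ, (∀ n, E.mem (u n)) →
      Tendsto (fun n => E.nrm (u n)) atTop (nhds 0) →
      MeasureTheory.TendstoInMeasure (mIoo α) u atTop 0)
    {Q : ℝ} (hQ1 : 1 ≤ Q) (hQ : E.qc ≤ Q)
    (a : ℕ → ℝ → ℂ) (hmem : ∀ k, E.mem (a k))
    (hnrm : ∀ k, E.nrm (a k) ≤ 2 * ((4*Q)⁻¹) ^ (k+1)) (N : ℕ) :
    ∃ h, E.mem h ∧ E.nrm h ≤ Q * (4:ℝ)⁻¹ ^ N ∧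
      ∀ᵐ t ∂(mIoo α), ∀ m : ℕ,
        (∑ k ∈ Finset.range m, ‖a (N+k) t‖) ≤ ‖h t‖ := by
  have hQ0 : 0 < Q := lt_of_lt_of_le one_pos hQ1
  set ca : ℕ → ℝ → ℂ := fun k => (fun t => ((‖a k t‖ : ℝ) : ℂ)) with hcadef
  have hcam : ∀ k, E.mem (ca k) ∧ E.nrm (ca k) ≤ E.nrm (a k) := by
    intro k
    exact E.mem_ofReal (E.measurable_of_mem (a k) (hmem k)).cabs (hmem k)
      (ae_of_all _ fun t => by simp [abs_of_nonneg (norm_nonneg (a k t))])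
  set SS : ℕ → ℝ → ℂ := fun m => ∑ k ∈ Finset.range m, ca (N+k) with hSSdef
  have hSSmem : ∀ m, E.mem (SS m) := fun m => E.mem_sum fun k => (hcam (N+k)).1
  -- key norm bound for blocks
  have hblock : ∀ p m : ℕ, E.nrm (∑ k ∈ Finset.range m, ca (N+p+k)) ≤ (4:ℝ)⁻¹^(N+p) := by
    intro p m
    refine le_trans (E.nrm_sum_le _ (fun k => (hcam (N+p+k)).1) m) ?_
    refine le_trans (Finset.sum_le_sum fun k _ => ?_) (geom_aux hQ1 (N+p) m)
    have h1 : E.nrm (ca (N+p+k)) ≤ 2 * ((4*Q)⁻¹)^(N+p+k+1) :=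
      le_trans (hcam (N+p+k)).2 (hnrm (N+p+k))
    have hqc : (0:ℝ) < E.qc := lt_of_lt_of_le one_pos E.one_le_qc
    have h2 : E.qc^(k+1) ≤ Q^(k+1) := pow_le_pow_left₀ hqc.le hQ (k+1)
    have h3 : 0 ≤ E.nrm (ca (N+p+k)) := E.nrm_nonneg _
    nlinarith [pow_pos hqc (k+1), pow_pos hQ0 (k+1),
      pow_nonneg (show (0:ℝ) ≤ (4*Q)⁻¹ by positivity) (N+p+k+1)]
  have hSSnrm : ∀ m, E.nrm (SS m) ≤ (4:ℝ)⁻¹^N := by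
    intro m
    have := hblock 0 m
    simpa using this
  -- Cauchy
  have hdiff : ∀ i j : ℕ, j ≤ i → E.nrm (SS i - SS j) ≤ (4:ℝ)⁻¹^j := by
    intro i j hji
    have heq : SS i - SS j = ∑ k ∈ Finset.range (i-j), ca (N+j+k) := by
      rw [hSSdef]
      rw [eq_comm, ← Finset.sum_Ico_eq_sub _ hji]
      rw [Finset.sum_Ico_eq_sum_range]
      exact Finset.sum_congr rfl fun k _ => by rw [← Nat.add_assoc]
    rw [heq]
    refine le_trans (hblock j (i-j)) ?_
    apply pow_le_pow_of_le_one (by norm_num) (by norm_num) (by omega)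
  have hcauchy : ∀ ε : ℝ, 0 < ε → ∃ M : ℕ, ∀ i j, M ≤ i → M ≤ j →
      E.nrm (SS i - SS j) < ε := by
    intro ε hε
    obtain ⟨M, hM⟩ := exists_pow_lt_of_lt_one hε (show (4:ℝ)⁻¹ < 1 by norm_num)
    refine ⟨M, fun i j hi hj => ?_⟩
    rcases le_total j i with hji | hij
    · refine lt_of_le_of_lt (le_trans (hdiff i j hji) ?_) hM
      apply pow_le_pow_of_le_one (by norm_num) (by norm_num) hj
    · rw [E.nrm_sub_symm (hSSmem i) (hSSmem j)]
      refine lt_of_le_of_lt (le_trans (hdiff j i hij) ?_) hM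
      apply pow_le_pow_of_le_one (by norm_num) (by norm_num) hi
  obtain ⟨h, hhmem, hhtend⟩ := E.complete SS hSSmem hcauchy
  refine ⟨h, hhmem, ?_, ?_⟩
  · -- norm bound
    refine le_of_forall_pos_le_add fun δ hδ => ?_
    have : ∀ᶠ m in atTop, E.nrm (SS m - h) < δ/Q := by
      have := hhtend
      rw [Metric.tendsto_atTop] at this
      obtain ⟨M, hM⟩ := this (δ/Q) (by positivity)
      filter_upwards [eventually_ge_atTop M] with m hm
      have := hM m hm
      rw [Real.dist_eq, sub_zero] at this
      exact lt_of_abs_lt this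
    obtain ⟨m, hm⟩ := this.exists
    have heq : SS m + (h - SS m) = h := by ring
    calc E.nrm h = E.nrm (SS m + (h - SS m)) := by rw [heq]
      _ ≤ E.qc * (E.nrm (SS m) + E.nrm (h - SS m)) :=
          E.nrm_add_le _ _ (hSSmem m) (E.mem_sub hhmem (hSSmem m))
      _ ≤ Q * ((4:ℝ)⁻¹^N + δ/Q) := by
          have h1 := hSSnrm m
          have h2 : E.nrm (h - SS m) ≤ δ/Q := by
            rw [E.nrm_sub_symm hhmem (hSSmem m)]
            exact hm.le
          have h3 : 0 ≤ E.nrm (SS m) := E.nrm_nonneg _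
          have h4 : 0 ≤ E.nrm (h - SS m) := E.nrm_nonneg _
          have hqc : (0:ℝ) < E.qc := lt_of_lt_of_le one_pos E.one_le_qc
          nlinarith
      _ = Q * (4:ℝ)⁻¹^N + δ := by field_simp
  · -- a.e. bound
    have := hemb (fun m => SS m - h) (fun m => E.mem_sub (hSSmem m) hhmem)
      (by
        refine hhtend.congr fun m => ?_
        rfl)
    obtain ⟨ms, hms, hae⟩ := this.exists_seq_tendsto_ae
    filter_upwards [hae] with t ht
    intro m
    have hconv : Tendsto (fun j => SS (ms j) t) atTop (𝓝 (h t)) := by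
      have h2 : Tendsto (fun j => (SS (ms j) t - h t) + h t) atTop (𝓝 (0 + h t)) := by
        refine Tendsto.add ?_ tendsto_const_nhds
        simpa using ht
      simpa using h2
    have habs : Tendsto (fun j => ‖SS (ms j) t‖) atTop
        (𝓝 (‖h t‖)) := by
      simpa using hconv.norm
    have hP : ∀ i : ℕ, ‖SS i t‖
        = ∑ k ∈ Finset.range i, ‖a (N+k) t‖ := by
      intro i
      have h3 : SS i t = ((∑ k ∈ Finset.range i, ‖a (N+k) t‖ : ℝ) : ℂ) := by
        simp [hSSdef, hcadef, Finset.sum_apply]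
      rw [h3, Complex.norm_real, Real.norm_eq_abs,
        abs_of_nonneg (Finset.sum_nonneg fun k _ => norm_nonneg _)]
    refine ge_of_tendsto habs ?_
    filter_upwards [eventually_ge_atTop m] with j hj
    rw [hP (ms j)]
    apply Finset.sum_le_sum_of_subset_of_nonneg
    · exact Finset.range_subset_range.2 (le_trans hj (hms.le_apply (x := j)))
    · intro k _ _
      exact norm_nonneg _
end Cal7
section Cal8
variable {α : ℝ≥0∞} {E1 E2 : QBIdealSpace (mIoo α)} {θ : ℝ} (hθ0 : 0 < θ) (hθ1 : θ < 1)

include hθ0 hθ1 in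
lemma cal_complete
    (hemb1 : ∀ u : ℕ → ℝ → ℂ, (∀ n, E1.mem (u n)) →
      Tendsto (fun n => E1.nrm (u n)) atTop (nhds 0) →
      MeasureTheory.TendstoInMeasure (mIoo α) u atTop 0)
    (hemb2 : ∀ u : ℕ → ℝ → ℂ, (∀ n, E2.mem (u n)) →
      Tendsto (fun n => E2.nrm (u n)) atTop (nhds 0) →
      MeasureTheory.TendstoInMeasure (mIoo α) u atTop 0)
    (u : ℕ → ℝ → ℂ) (hu : ∀ n, calMem E1.mem E2.mem θ (u n))
    (hc : ∀ ε : ℝ, 0 < ε → ∃ N : ℕ, ∀ i j, N ≤ i → N ≤ j →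
      calNrm E1.mem E1.nrm E2.mem E2.nrm θ (u i - u j) < ε) :
    ∃ f, calMem E1.mem E2.mem θ f ∧
      Tendsto (fun n => calNrm E1.mem E1.nrm E2.mem E2.nrm θ (u n - f)) atTop (nhds 0) := by
  classical
  set CN := calNrm E1.mem E1.nrm E2.mem E2.nrm θ with hCNdef
  set CM := calMem E1.mem E2.mem θ with hCMdef
  have hsub : ∀ f g : ℝ → ℂ, CM f → CM g → CM (f - g) := by
    intro f g hf hg
    rw [sub_eq_add_neg]
    exact (cal_add hθ0 hθ1 hf (calMem_neg hg)).1
  set Q := max E1.qc E2.qc with hQdef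
  have hQ1 : (1:ℝ) ≤ Q := le_trans E1.one_le_qc (le_max_left _ _)
  have hQ0 : (0:ℝ) < Q := lt_of_lt_of_le one_pos hQ1
  set ρ : ℝ := (4*Q)⁻¹ with hρdef
  have hρ0 : 0 < ρ := by positivity
  have hρ4 : ρ ≤ 4⁻¹ := by
    rw [hρdef]
    apply inv_anti₀ (by norm_num)
    nlinarith
  choose Nf hNf using fun k : ℕ => hc (ρ^(k+1)) (by positivity)
  set n : ℕ → ℕ := fun k => Nat.rec (Nf 0) (fun k ih => max (ih + 1) (Nf (k+1))) k with hndef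
  have hnsucc : ∀ k, n (k+1) = max (n k + 1) (Nf (k+1)) := fun k => rfl
  have hnmono : Monotone n := monotone_nat_of_le_succ fun k => by
    rw [hnsucc]; omega
  have hnN : ∀ k, Nf k ≤ n k := by
    intro k
    cases k with
    | zero => exact le_refl _
    | succ k => rw [hnsucc]; omega
  set d : ℕ → ℝ → ℂ := fun k => u (n (k+1)) - u (n k) with hddef
  have hdmem : ∀ k, CM (d k) := fun k => hsub _ _ (hu _) (hu _)
  have hd : ∀ k, CN (d k) < ρ^(k+1) := by
    intro k
    exact hNf k (n (k+1)) (n k) (le_trans (hnN k) (hnmono (Nat.le_succ k))) (hnN k)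
  choose a b ha hb hfacd han hbn using
    fun k : ℕ => exists_good_factor hθ0 hθ1 (hdmem k) (show (0:ℝ) < ρ^(k+1) by positivity)
  have hA : ∀ k, E1.nrm (a k) ≤ 2 * ρ^(k+1) := fun k => by
    have := hd k; have := han k; rw [← hCNdef] at *; linarith
  have hB : ∀ k, E2.nrm (b k) ≤ 2 * ρ^(k+1) := fun k => by
    have := hd k; have := hbn k; rw [← hCNdef] at *; linarith
  choose h1 h1mem h1nrm h1ae using
    fun N : ℕ => tail_control E1 hemb1 hQ1 (le_max_left _ _) a ha hA N
  choose h2 h2mem h2nrm h2ae using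
    fun N : ℕ => tail_control E2 hemb2 hQ1 (le_max_right _ _) b hb hB N
  -- telescoping sums
  have htel : ∀ (t : ℝ) (N k : ℕ), N ≤ k →
      ∑ j ∈ Finset.Ico N k, d j t = u (n k) t - u (n N) t := by
    intro t N k hNk
    induction k, hNk using Nat.le_induction with
    | base => simp
    | succ k hk ih =>
      rw [Finset.sum_Ico_succ_top hk, ih]
      have : d k t = u (n (k+1)) t - u (n k) t := rfl
      rw [this]; ring
  -- a.e. existence of limit
  have hexists : ∀ᵐ t ∂(mIoo α), ∃ l : ℂ, Tendsto (fun k => u (n k) t) atTop (nhds l) := by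
    filter_upwards [h1ae 0, h2ae 0] with t ht1 ht2
    have hsumA : Summable (fun k => ‖a k t‖) := by
      refine summable_of_sum_range_le (c := ‖h1 0 t‖)
        (fun k => norm_nonneg _) (fun m => ?_)
      have := ht1 m
      simpa using this
    have hsumB : Summable (fun k => ‖b k t‖) := by
      refine summable_of_sum_range_le (c := ‖h2 0 t‖)
        (fun k => norm_nonneg _) (fun m => ?_)
      have := ht2 m
      simpa using this
    have hsumD : Summable (fun k => ‖d k t‖) := by
      refine Summable.of_nonneg_of_le (fun k => norm_nonneg _) (fun k => ?_)
        ((hsumA.mul_left (1-θ)).add (hsumB.mul_left θ))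
      rw [hfacd k t]
      exact Real.geom_mean_le_arith_mean2_weighted (by linarith) hθ0.le
        (norm_nonneg _) (norm_nonneg _) (by ring)
    have hsumd : Summable (fun k => d k t) := by
      apply Summable.of_norm
      simpa using hsumD
    have htend := hsumd.hasSum.tendsto_sum_nat
    refine ⟨(∑' k, d k t) + u (n 0) t, ?_⟩
    have : Tendsto (fun k => (∑ j ∈ Finset.range k, d j t) + u (n 0) t) atTop
        (nhds ((∑' k, d k t) + u (n 0) t)) := htend.add tendsto_const_nhds
    refine this.congr fun k => ?_
    have h0k : (0:ℕ) ≤ k := Nat.zero_le k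
    have := htel t 0 k h0k
    rw [show Finset.Ico 0 k = Finset.range k by rw [Finset.range_eq_Ico]] at this
    rw [this]; ring
  obtain ⟨f, hfmeas, hfconv⟩ := measurable_limit_of_tendsto_metrizable_ae
    (fun k => ((hu (n k)).1.aemeasurable)) hexists
  -- key tail bound
  have hkey : ∀ N, CM (f - u (n N)) ∧ CN (f - u (n N)) ≤ Q * (4:ℝ)⁻¹^N := by
    intro N
    have h1nn : 0 ≤ E1.nrm (h1 N) := E1.nrm_nonneg _
    have h2nn : 0 ≤ E2.nrm (h2 N) := E2.nrm_nonneg _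
    have hQN : (0:ℝ) ≤ Q * (4:ℝ)⁻¹^N := by positivity
    have hdom : ∀ᵐ t ∂(mIoo α), ‖(f - u (n N)) t‖ ≤
        (‖h1 N t‖) ^ (1-θ) * (‖h2 N t‖) ^ θ := by
      filter_upwards [hfconv, h1ae N, h2ae N] with t htc ht1 ht2
      have hstep : ∀ k, N ≤ k → ‖u (n k) t - u (n N) t‖ ≤
          (‖h1 N t‖) ^ (1-θ) * (‖h2 N t‖) ^ θ := by
        intro k hNk
        rw [← htel t N k hNk]
        calc ‖∑ j ∈ Finset.Ico N k, d j t‖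
            ≤ ∑ j ∈ Finset.Ico N k, ‖d j t‖ := norm_sum_le _ _
          _ = ∑ i ∈ Finset.range (k-N), ‖d (N+i) t‖ := by
              rw [Finset.sum_Ico_eq_sum_range]
          _ = ∑ i ∈ Finset.range (k-N),
              ‖a (N+i) t‖ ^ (1-θ) * ‖b (N+i) t‖ ^ θ :=
              Finset.sum_congr rfl fun i _ => hfacd (N+i) t
          _ ≤ (∑ i ∈ Finset.range (k-N), ‖a (N+i) t‖) ^ (1-θ)
              * (∑ i ∈ Finset.range (k-N), ‖b (N+i) t‖) ^ θ :=
              holder_sum hθ0 hθ1 (Finset.range (k-N))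
                (fun i => ‖a (N+i) t‖) (fun i => ‖b (N+i) t‖)
                (fun i => norm_nonneg _) (fun i => norm_nonneg _)
          _ ≤ (‖h1 N t‖) ^ (1-θ) * (‖h2 N t‖) ^ θ := by
              refine mul_le_mul (Real.rpow_le_rpow
                  (Finset.sum_nonneg fun i _ => norm_nonneg _) (ht1 (k-N))
                  (by linarith))
                (Real.rpow_le_rpow
                  (Finset.sum_nonneg fun i _ => norm_nonneg _) (ht2 (k-N)) hθ0.le)
                (Real.rpow_nonneg (Finset.sum_nonneg fun i _ => norm_nonneg _) _)
                (Real.rpow_nonneg (norm_nonneg _) _)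
      have hlim : Tendsto (fun k => ‖u (n k) t - u (n N) t‖) atTop
          (nhds (‖f t - u (n N) t‖)) := by
        have := (htc.sub (tendsto_const_nhds (x := u (n N) t))).norm
        simpa using this
      have hle := le_of_tendsto hlim (by
        filter_upwards [eventually_ge_atTop N] with k hk
        exact hstep k hk)
      exact hle
    have hfd := factor_dominated hθ0 hθ1 (hfmeas.sub (hu (n N)).1)
      (E1.measurable_of_mem _ (h1mem N)).cabs (E2.measurable_of_mem _ (h2mem N)).cabs
      (fun t => norm_nonneg _) (fun t => norm_nonneg _)
      (h1mem N) (h2mem N) hdom (ae_of_all _ fun t => le_rfl) (ae_of_all _ fun t => le_rfl)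
    refine ⟨hfd.1, le_trans hfd.2 ?_⟩
    calc E1.nrm (h1 N) ^ (1-θ) * E2.nrm (h2 N) ^ θ
        ≤ (Q * (4:ℝ)⁻¹^N) ^ (1-θ) * (Q * (4:ℝ)⁻¹^N) ^ θ :=
          mul_le_mul (Real.rpow_le_rpow h1nn (h1nrm N) (by linarith))
            (Real.rpow_le_rpow h2nn (h2nrm N) hθ0.le)
            (Real.rpow_nonneg h2nn _) (Real.rpow_nonneg hQN _)
      _ = Q * (4:ℝ)⁻¹^N := rpow_split hQN
  -- membership of f
  have hmemf : CM f := by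
    have := (cal_add hθ0 hθ1 (hkey 0).1 (hu (n 0))).1
    have heq : f - u (n 0) + u (n 0) = f := by abel
    rwa [heq] at this
  refine ⟨f, hmemf, ?_⟩
  rw [Metric.tendsto_atTop]
  intro ε hε
  obtain ⟨K, hK⟩ := exists_pow_lt_of_lt_one
    (show (0:ℝ) < ε/(2*Q^2) by positivity) (show (4:ℝ)⁻¹ < 1 by norm_num)
  refine ⟨n K, fun m hm => ?_⟩
  have hcn1 : CN (u m - u (n K)) < ρ^(K+1) :=
    hNf K m (n K) (le_trans (hnN K) hm) (hnN K)
  have hb1 : ρ^(K+1) ≤ (4:ℝ)⁻¹^K := by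
    calc ρ^(K+1) ≤ (4:ℝ)⁻¹^(K+1) := pow_le_pow_left₀ hρ0.le hρ4 (K+1)
      _ ≤ (4:ℝ)⁻¹^K := pow_le_pow_of_le_one (by norm_num) (by norm_num) (by omega)
  have hcn2 : CN (u (n K) - f) ≤ Q * (4:ℝ)⁻¹^K := by
    have heq : CN (u (n K) - f) = CN (f - u (n K)) :=
      calNrm_congr_abs fun t => norm_sub_rev (u (n K) t) (f t)
    rw [heq]
    exact (hkey K).2
  have hdec : u m - f = (u m - u (n K)) + (u (n K) - f) := by abel
  have hadd := (cal_add hθ0 hθ1 (hsub _ _ (hu m) (hu (n K))) (hsub _ _ (hu (n K)) hmemf)).2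
  rw [← hdec] at hadd
  have hbound : CN (u m - f) ≤ 2*Q^2 * (4:ℝ)⁻¹^K := by
    have h0 : 0 ≤ CN (u m - u (n K)) := calNrm_nonneg _
    have h0' : 0 ≤ CN (u (n K) - f) := calNrm_nonneg _
    nlinarith [pow_nonneg (show (0:ℝ) ≤ 4⁻¹ by norm_num) K]
  rw [Real.dist_eq, sub_zero, abs_of_nonneg (calNrm_nonneg _)]
  calc CN (u m - f) ≤ 2*Q^2 * (4:ℝ)⁻¹^K := hbound
    _ < 2*Q^2 * (ε/(2*Q^2)) := by
        apply mul_lt_mul_of_pos_left hK (by positivity)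
    _ = ε := by field_simp
end Cal8

/-- If `E₁, E₂` are quasi Banach ideal spaces on `(0,α)` continuously embedded
in `L₀(0,α)` (convergence in measure) and `0 < θ < 1`, then the Calderón space `E₁^{1-θ}E₂^θ`
is a quasi Banach ideal space on `(0,α)`; in particular it is complete. -/
theorem calderon_is_quasi_banach_ideal_space
    (α : ℝ≥0∞) (hα : 0 < α)
    (E1 E2 : QBIdealSpace (mIoo α))
    (θ : ℝ) (hθ0 : 0 < θ) (hθ1 : θ < 1)
    (hemb1 : ∀ u : ℕ → ℝ → ℂ, (∀ n, E1.mem (u n)) →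
      Tendsto (fun n => E1.nrm (u n)) atTop (nhds 0) →
      MeasureTheory.TendstoInMeasure (mIoo α) u atTop 0)
    (hemb2 : ∀ u : ℕ → ℝ → ℂ, (∀ n, E2.mem (u n)) →
      Tendsto (fun n => E2.nrm (u n)) atTop (nhds 0) →
      MeasureTheory.TendstoInMeasure (mIoo α) u atTop 0) :
    ∃ F : QBIdealSpace (mIoo α),
      (∀ f, F.mem f ↔ calMem E1.mem E2.mem θ f) ∧
      (∀ f, F.mem f → F.nrm f = calNrm E1.mem E1.nrm E2.mem E2.nrm θ f) := by
  refine ⟨{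
    mem := calMem E1.mem E2.mem θ
    nrm := calNrm E1.mem E1.nrm E2.mem E2.nrm θ
    qc := max E1.qc E2.qc
    one_le_qc := le_trans E1.one_le_qc (le_max_left _ _)
    measurable_of_mem := fun f hf => hf.1
    zero_mem := calMem_zero hθ1
    add_mem := fun f g hf hg => (cal_add hθ0 hθ1 hf hg).1
    smul_mem := fun c f hf => (calNrm_smul_le hθ0 hθ1 c hf).1
    nrm_nonneg := fun f => calNrm_nonneg f
    nrm_smul := fun c f hf => calNrm_smul hθ0 hθ1 c hf
    nrm_add_le := fun f g hf hg => (cal_add hθ0 hθ1 hf hg).2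
    nrm_eq_zero_iff := fun f hf =>
      ⟨fun h => ae_zero_of_calNrm_zero hθ0 hθ1 hemb1 hemb2 hf h,
       fun h => calNrm_eq_zero_of_ae hθ0 hθ1 hf h⟩
    ideal := fun f g hg hfm hle => cal_ideal hθ0 hθ1 hg hfm hle
    complete := fun u hu hc => cal_complete hθ0 hθ1 hemb1 hemb2 u hu hc
  }, fun f => Iff.rfl, fun f _ => rfl⟩
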